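/- For any integers n ≥ 1 and T ≥ 2n+1, any symmetric matrix H ∈ ℝ^{n×n}, any t ∈ ℤ, the sum (1/T) Σ_{j=t}^{t+T-1} M(j) S(j)^T H S(j) = 0, where S and M are the sinusoidal dither and demodulation vectors with frequencies ω_i = 2πi/T. -/

import Mathlib

open Finset

lemma sin_sum_zero (T : ℕ) (hT0 : 0 < T) (m t : ℤ) :
    ∑ j ∈ Finset.range T, Real.sin (2 * Real.pi * m / T * (t + j)) = 0 := by
  have hTR : (T : ℝ) ≠ 0 := Nat.cast_ne_zero.mpr hT0.ne'
  by_cases h : (T : ℤ) ∣ m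
  · obtain ⟨k, rfl⟩ := h
    refine Finset.sum_eq_zero fun j _ => ?_
    have : 2 * Real.pi * ((T : ℤ) * k : ℤ) / T * ((t : ℝ) + j)
        = ((2 * k * (t + j) : ℤ) : ℝ) * Real.pi := by
      push_cast
      field_simp
    rw [this, Real.sin_int_mul_pi]
  · set θ : ℝ := 2 * Real.pi * m / T with hθ
    have hz1 : Complex.exp ((θ : ℂ) * Complex.I) ≠ 1 := by
      intro hk'
      rw [Complex.exp_eq_one_iff] at hk'
      obtain ⟨k, hk⟩ := hk'
      apply h
      have : θ = k * (2 * Real.pi) := by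
        simpa using
          congrArg Complex.im (by rw [hk] : (θ : ℂ) * Complex.I = (k : ℂ) * (2 * Real.pi * Complex.I))
      have hm : (m : ℝ) = k * T := by
        rw [hθ] at this
        field_simp at this
        have hpi : (2 : ℝ) * Real.pi ≠ 0 := by positivity
        apply mul_left_cancel₀ hpi
        rw [this]; ring
      exact ⟨k, by push_cast [mul_comm]; exact_mod_cast hm⟩
    have hTθ : (T : ℝ) * θ = (m : ℝ) * (2 * Real.pi) := by
      rw [hθ]; field_simp
    have key : ∑ j ∈ Finset.range T, Complex.exp ((θ * (t + j) : ℝ) * Complex.I) = 0 := by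
      have hrw : ∀ j : ℕ, ((θ * (t + j) : ℝ) : ℂ) * Complex.I
          = ((θ * t : ℝ) : ℂ) * Complex.I + (j : ℕ) * ((θ : ℂ) * Complex.I) := by
        intro j; push_cast; ring
      calc ∑ j ∈ Finset.range T, Complex.exp ((θ * (t + j) : ℝ) * Complex.I)
          = ∑ j ∈ Finset.range T, Complex.exp (((θ * t : ℝ) : ℂ) * Complex.I)
              * Complex.exp ((θ : ℂ) * Complex.I) ^ j := by
            refine Finset.sum_congr rfl fun j _ => ?_
            rw [hrw j, Complex.exp_add, Complex.exp_nat_mul]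
        _ = Complex.exp (((θ * t : ℝ) : ℂ) * Complex.I)
              * ((Complex.exp ((θ : ℂ) * Complex.I) ^ T - 1)
                / (Complex.exp ((θ : ℂ) * Complex.I) - 1)) := by
            rw [← Finset.mul_sum, geom_sum_eq hz1]
        _ = 0 := by
            have hpow : Complex.exp ((θ : ℂ) * Complex.I) ^ T = 1 := by
              rw [← Complex.exp_nat_mul]
              have hC : (T : ℂ) * (θ : ℂ) = (m : ℂ) * (2 * (Real.pi : ℂ)) := by
                have := congrArg (fun x : ℝ => (x : ℂ)) hTθ
                push_cast at this
                exact this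
              have : (T : ℂ) * ((θ : ℂ) * Complex.I)
                  = (m : ℤ) * (2 * (Real.pi : ℂ) * Complex.I) := by
                calc (T : ℂ) * ((θ : ℂ) * Complex.I) = ((T : ℂ) * (θ : ℂ)) * Complex.I := by ring
                  _ = ((m : ℂ) * (2 * (Real.pi : ℂ))) * Complex.I := by rw [hC]
                  _ = (m : ℤ) * (2 * (Real.pi : ℂ) * Complex.I) := by push_cast; ring
              rw [this, Complex.exp_int_mul_two_pi_mul_I]
            rw [hpow]
            simp
    have hsin : ∑ j ∈ Finset.range T, Real.sin (θ * (t + j)) = 0 := by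
      have h2 : ∀ j ∈ Finset.range T, Real.sin (θ * ((t : ℝ) + j))
          = (Complex.exp ((θ * (t + j) : ℝ) * Complex.I)).im :=
        fun j _ => (Complex.exp_ofReal_mul_I_im _).symm
      rw [Finset.sum_congr rfl h2, ← Complex.im_sum, key]
      simp
    simpa [hθ] using hsin

lemma sin3 (A B C : ℝ) :
    Real.sin A * Real.sin B * Real.sin C
      = (Real.sin (C + A - B) + Real.sin (C - A + B)
          - Real.sin (C + A + B) - Real.sin (C - A - B)) / 4 := by
  have h1 : C + A - B = (C + A) - B := by ring
  have h2 : C - A + B = (C - A) + B := by ring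
  have h3 : C + A + B = (C + A) + B := by ring
  have h4 : C - A - B = (C - A) - B := by ring
  rw [h1, h2, h3, h4]
  simp [Real.sin_add, Real.sin_sub, Real.cos_add, Real.cos_sub]
  ring

lemma triple_sum_zero (T : ℕ) (hT0 : 0 < T) (a b c t : ℤ) :
    ∑ j ∈ Finset.range T,
      Real.sin (2 * Real.pi * a / T * (t + j)) * Real.sin (2 * Real.pi * b / T * (t + j))
        * Real.sin (2 * Real.pi * c / T * (t + j)) = 0 := by
  have hrw : ∀ j ∈ Finset.range T,
      Real.sin (2 * Real.pi * a / T * (t + j)) * Real.sin (2 * Real.pi * b / T * (t + j))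
        * Real.sin (2 * Real.pi * c / T * (t + j))
      = (Real.sin (2 * Real.pi * ((c + a - b : ℤ)) / T * (t + j))
          + Real.sin (2 * Real.pi * ((c - a + b : ℤ)) / T * (t + j))
          - Real.sin (2 * Real.pi * ((c + a + b : ℤ)) / T * (t + j))
          - Real.sin (2 * Real.pi * ((c - a - b : ℤ)) / T * (t + j))) / 4 := by
    intro j _
    have e1 : 2 * Real.pi * (c : ℝ) / T * ((t : ℝ) + j) + 2 * Real.pi * a / T * ((t : ℝ) + j)
        - 2 * Real.pi * b / T * ((t : ℝ) + j)
        = 2 * Real.pi * ((c + a - b : ℤ) : ℝ) / T * ((t : ℝ) + j) := by push_cast; ring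
    have e2 : 2 * Real.pi * (c : ℝ) / T * ((t : ℝ) + j) - 2 * Real.pi * a / T * ((t : ℝ) + j)
        + 2 * Real.pi * b / T * ((t : ℝ) + j)
        = 2 * Real.pi * ((c - a + b : ℤ) : ℝ) / T * ((t : ℝ) + j) := by push_cast; ring
    have e3 : 2 * Real.pi * (c : ℝ) / T * ((t : ℝ) + j) + 2 * Real.pi * a / T * ((t : ℝ) + j)
        + 2 * Real.pi * b / T * ((t : ℝ) + j)
        = 2 * Real.pi * ((c + a + b : ℤ) : ℝ) / T * ((t : ℝ) + j) := by push_cast; ring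
    have e4 : 2 * Real.pi * (c : ℝ) / T * ((t : ℝ) + j) - 2 * Real.pi * a / T * ((t : ℝ) + j)
        - 2 * Real.pi * b / T * ((t : ℝ) + j)
        = 2 * Real.pi * ((c - a - b : ℤ) : ℝ) / T * ((t : ℝ) + j) := by push_cast; ring
    rw [sin3, e1, e2, e3, e4]
  rw [Finset.sum_congr rfl hrw]
  simp only [sub_div, add_div]
  rw [Finset.sum_sub_distrib, Finset.sum_sub_distrib, Finset.sum_add_distrib,
    ← Finset.sum_div, ← Finset.sum_div, ← Finset.sum_div, ← Finset.sum_div]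
  rw [sin_sum_zero T hT0 (c+a-b) t, sin_sum_zero T hT0 (c-a+b) t,
    sin_sum_zero T hT0 (c+a+b) t, sin_sum_zero T hT0 (c-a-b) t]
  norm_num

/-- The average over any window of length T of M(j) S(j)ᵀ H S(j) is the zero vector,
for any symmetric H. -/
theorem stmt_2 (n T : ℕ) (hn : 1 ≤ n) (hT : 2 * n + 1 ≤ T)
    (H : Matrix (Fin n) (Fin n) ℝ) (hH : H.IsSymm)
    (a : Fin n → ℝ) (ha : ∀ i, a i ≠ 0)
    (S M : ℤ → Fin n → ℝ)
    (hS : ∀ (s : ℤ) (i : Fin n),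
      S s i = a i * Real.sin (2 * Real.pi * ((i : ℕ) + 1) / T * (s : ℝ)))
    (hM : ∀ (s : ℤ) (i : Fin n),
      M s i = (2 / a i) * Real.sin (2 * Real.pi * ((i : ℕ) + 1) / T * (s : ℝ)))
    (t : ℤ) :
    (1 / (T : ℝ)) • ∑ j ∈ Finset.range T,
        (dotProduct (S (t + j)) (H.mulVec (S (t + j)))) • M (t + j)
      = (0 : Fin n → ℝ) := by
  have hT0 : 0 < T := by omega
  funext i
  simp only [Pi.smul_apply, Finset.sum_apply, smul_eq_mul, Pi.zero_apply]
  have main : ∑ j ∈ Finset.range T,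
      (dotProduct (S (t + j)) (H.mulVec (S (t + j)))) * M (t + j) i = 0 := by
    have step : ∀ j ∈ Finset.range T,
        (dotProduct (S (t + j)) (H.mulVec (S (t + j)))) * M (t + j) i
        = ∑ k, ∑ l, (a k * H k l * a l * (2 / a i)) *
            (Real.sin (2 * Real.pi * ((k : ℕ) + 1) / T * ((t + j : ℤ) : ℝ))
             * Real.sin (2 * Real.pi * ((l : ℕ) + 1) / T * ((t + j : ℤ) : ℝ))
             * Real.sin (2 * Real.pi * ((i : ℕ) + 1) / T * ((t + j : ℤ) : ℝ))) := by
      intro j _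
      rw [hM]
      simp only [dotProduct, Matrix.mulVec, hS]
      rw [Finset.sum_mul]
      refine Finset.sum_congr rfl fun k _ => ?_
      rw [Finset.mul_sum, Finset.sum_mul]
      refine Finset.sum_congr rfl fun l _ => ?_
      ring
    rw [Finset.sum_congr rfl step, Finset.sum_comm]
    refine Finset.sum_eq_zero fun k _ => ?_
    rw [Finset.sum_comm]
    refine Finset.sum_eq_zero fun l _ => ?_
    rw [← Finset.mul_sum]
    have h0 : ∑ j ∈ Finset.range T,
        (Real.sin (2 * Real.pi * ((k : ℕ) + 1) / T * ((t + j : ℤ) : ℝ))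
          * Real.sin (2 * Real.pi * ((l : ℕ) + 1) / T * ((t + j : ℤ) : ℝ))
          * Real.sin (2 * Real.pi * ((i : ℕ) + 1) / T * ((t + j : ℤ) : ℝ))) = 0 := by
      have h1 := triple_sum_zero T hT0 (((k : ℕ) : ℤ) + 1) (((l : ℕ) : ℤ) + 1)
        (((i : ℕ) : ℤ) + 1) t
      push_cast at h1 ⊢
      exact h1
    rw [h0, mul_zero]
  rw [main, mul_zero]
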